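/- For every n ∈ ℕ, the map sending y ∈ F to the vector (y_{1,2}, y_{3,4}, …, y_{2n-1,2n}) ∈ {0,1}^n is a bijection from F onto {0,1}^n; in particular, the face F has exactly 2^n elements. -/

import Mathlib

/-- `y ∈ LOP m`: `y` is the characteristic vector of a linear order (permutation `π`)
on `{1, …, m}`, with coordinates `y i j` for `1 ≤ i < j ≤ m` equal to `1` iff `π i < π j`;
coordinates outside the index range are normalized to `0`. -/
def LOP (m : ℕ) : Set (ℕ → ℕ → ℝ) :=
  {y | (∀ i j, ¬(1 ≤ i ∧ i < j ∧ j ≤ m) → y i j = 0) ∧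
    ∃ π : ℕ → ℕ, Set.BijOn π (Set.Icc 1 m) (Set.Icc 1 m) ∧
      ∀ i j, 1 ≤ i → i < j → j ≤ m → y i j = if π i < π j then (1 : ℝ) else 0}

/-- The face `F ⊆ LOP (2n)` cut out by the supporting hyperplanes
`y_{2i,2j-1} = 0`, `y_{2i-1,2i} + y_{2i,2j} - y_{2i-1,2j} = 0` and
`y_{2i-1,2j-1} + y_{2j-1,2j} - y_{2i-1,2j} = 0` for all `1 ≤ i < j ≤ n`. -/
def FaceF (n : ℕ) : Set (ℕ → ℕ → ℝ) :=
  {y | y ∈ LOP (2 * n) ∧ ∀ i j, 1 ≤ i → i < j → j ≤ n →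
    y (2 * i) (2 * j - 1) = 0 ∧
    y (2 * i - 1) (2 * i) + y (2 * i) (2 * j) - y (2 * i - 1) (2 * j) = 0 ∧
    y (2 * i - 1) (2 * j - 1) + y (2 * j - 1) (2 * j) - y (2 * i - 1) (2 * j) = 0}

/-- The 0/1 cube `{0,1}^n`, as vectors `ℕ → ℝ` normalized to `0` outside `{1,…,n}`. -/
def cube01 (n : ℕ) : Set (ℕ → ℝ) :=
  {x | (∀ i, ¬(1 ≤ i ∧ i ≤ n) → x i = 0) ∧ ∀ i, 1 ≤ i → i ≤ n → x i = 0 ∨ x i = 1}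

/-- The map sending `y` to `(y 1 2, y 3 4, …, y (2n-1) (2n))`. -/
def diagMap (n : ℕ) (y : ℕ → ℕ → ℝ) : ℕ → ℝ := fun i =>
  if 1 ≤ i ∧ i ≤ n then y (2 * i - 1) (2 * i) else 0


open Finset in
/-- number of `true`s of `b` on `[i, n]` -/
def cntT (n : ℕ) (b : ℕ → Bool) (i : ℕ) : ℕ := ((Finset.Icc i n).filter (fun k => b k = true)).card

open Finset in
def cntF (n : ℕ) (b : ℕ → Bool) (i : ℕ) : ℕ := ((Finset.Icc i n).filter (fun k => b k = false)).card

lemma cntT_add_cntF (n : ℕ) (b : ℕ → Bool) (i : ℕ) :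
    cntT n b i + cntF n b i = n + 1 - i := by
  classical
  have h := Finset.card_filter_add_card_filter_not (s := Finset.Icc i n)
    (p := fun k => b k = true)
  simp only [cntT, cntF, Nat.card_Icc] at *
  rw [← h]
  congr 1
  apply Finset.card_bij (fun a _ => a) <;> intro a <;> simp_all

lemma cntT_anti (n : ℕ) (b : ℕ → Bool) {i j : ℕ} (h : i ≤ j) : cntT n b j ≤ cntT n b i :=
  Finset.card_le_card (Finset.filter_subset_filter _ (Finset.Icc_subset_Icc_left h))

lemma cntF_anti (n : ℕ) (b : ℕ → Bool) {i j : ℕ} (h : i ≤ j) : cntF n b j ≤ cntF n b i :=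
  Finset.card_le_card (Finset.filter_subset_filter _ (Finset.Icc_subset_Icc_left h))

lemma cntT_pos (n : ℕ) (b : ℕ → Bool) {i : ℕ} (hin : i ≤ n) (hb : b i = true) :
    1 ≤ cntT n b i := by
  have : i ∈ (Finset.Icc i n).filter (fun k => b k = true) := by
    simp [Finset.mem_filter, hin, hb]
  exact Finset.card_pos.mpr ⟨i, this⟩

lemma cntF_pos (n : ℕ) (b : ℕ → Bool) {i : ℕ} (hin : i ≤ n) (hb : b i = false) :
    1 ≤ cntF n b i := by
  have : i ∈ (Finset.Icc i n).filter (fun k => b k = false) := by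
    simp [Finset.mem_filter, hin, hb]
  exact Finset.card_pos.mpr ⟨i, this⟩

lemma cntT_strict (n : ℕ) (b : ℕ → Bool) {i j : ℕ} (hij : i < j) (hin : i ≤ n)
    (hb : b i = true) : cntT n b j < cntT n b i := by
  have hsub : insert i ((Finset.Icc j n).filter (fun k => b k = true)) ⊆
      (Finset.Icc i n).filter (fun k => b k = true) := by
    intro x hx
    rcases Finset.mem_insert.mp hx with rfl | hx
    · simp [Finset.mem_filter, hin, hb]
    · simp only [Finset.mem_filter, Finset.mem_Icc] at hx ⊢
      exact ⟨⟨by omega, hx.1.2⟩, hx.2⟩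
  have hnot : i ∉ (Finset.Icc j n).filter (fun k => b k = true) := by
    simp only [Finset.mem_filter, Finset.mem_Icc]; omega
  have := Finset.card_le_card hsub
  rw [Finset.card_insert_of_notMem hnot] at this
  simpa [cntT] using this

lemma cntF_strict (n : ℕ) (b : ℕ → Bool) {i j : ℕ} (hij : i < j) (hin : i ≤ n)
    (hb : b i = false) : cntF n b j < cntF n b i := by
  have hsub : insert i ((Finset.Icc j n).filter (fun k => b k = false)) ⊆
      (Finset.Icc i n).filter (fun k => b k = false) := by
    intro x hx
    rcases Finset.mem_insert.mp hx with rfl | hx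
    · simp [Finset.mem_filter, hin, hb]
    · simp only [Finset.mem_filter, Finset.mem_Icc] at hx ⊢
      exact ⟨⟨by omega, hx.1.2⟩, hx.2⟩
  have hnot : i ∉ (Finset.Icc j n).filter (fun k => b k = false) := by
    simp only [Finset.mem_filter, Finset.mem_Icc]; omega
  have := Finset.card_le_card hsub
  rw [Finset.card_insert_of_notMem hnot] at this
  simpa [cntF] using this

/-- the permutation realizing the linear order determined by `b` -/
def pmF (n : ℕ) (b : ℕ → Bool) (a : ℕ) : ℕ :=
  if a % 2 = 1 then
    (if b ((a+1)/2) then cntT n b ((a+1)/2) else cntT n b 1 + 2 * cntF n b ((a+1)/2))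
  else
    (if b (a/2) then 2*n - cntT n b 1 + cntT n b (a/2)
     else cntT n b 1 + 2 * cntF n b (a/2) - 1)


lemma pmF_oddT (n : ℕ) (b : ℕ → Bool) {i : ℕ} (hi : 1 ≤ i) (hb : b i = true) :
    pmF n b (2*i-1) = cntT n b i := by
  have h1 : (2*i-1) % 2 = 1 := by omega
  have h2 : (2*i-1+1)/2 = i := by omega
  rw [pmF, if_pos h1, h2, if_pos hb]

lemma pmF_oddF (n : ℕ) (b : ℕ → Bool) {i : ℕ} (hi : 1 ≤ i) (hb : b i = false) :
    pmF n b (2*i-1) = cntT n b 1 + 2 * cntF n b i := by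
  have h1 : (2*i-1) % 2 = 1 := by omega
  have h2 : (2*i-1+1)/2 = i := by omega
  rw [pmF, if_pos h1, h2, if_neg (by simp [hb])]

lemma pmF_evenT (n : ℕ) (b : ℕ → Bool) {i : ℕ} (hi : 1 ≤ i) (hb : b i = true) :
    pmF n b (2*i) = 2*n - cntT n b 1 + cntT n b i := by
  have h1 : ¬ ((2*i) % 2 = 1) := by omega
  have h2 : (2*i)/2 = i := by omega
  rw [pmF, if_neg h1, h2, if_pos hb]

lemma pmF_evenF (n : ℕ) (b : ℕ → Bool) {i : ℕ} (hi : 1 ≤ i) (hb : b i = false) :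
    pmF n b (2*i) = cntT n b 1 + 2 * cntF n b i - 1 := by
  have h1 : ¬ ((2*i) % 2 = 1) := by omega
  have h2 : (2*i)/2 = i := by omega
  rw [pmF, if_neg h1, h2, if_neg (by simp [hb])]

lemma cntT_le_n (n : ℕ) (b : ℕ → Bool) : cntT n b 1 + cntF n b 1 = n := by
  have := cntT_add_cntF n b 1; omega

/-- All the count facts needed, for a single index. -/
lemma count_facts (n : ℕ) (b : ℕ → Bool) {i : ℕ} (h1 : 1 ≤ i) (h2 : i ≤ n) :
    cntT n b i ≤ cntT n b 1 ∧ cntF n b i ≤ cntF n b 1 ∧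
    (b i = true → 1 ≤ cntT n b i) ∧ (b i = false → 1 ≤ cntF n b i) :=
  ⟨cntT_anti n b h1, cntF_anti n b h1,
    fun hb => cntT_pos n b h2 hb, fun hb => cntF_pos n b h2 hb⟩

/-- pmF maps `[1, 2n]` into `[1, 2n]`. -/
lemma pmF_mapsTo (n : ℕ) (b : ℕ → Bool) :
    Set.MapsTo (pmF n b) (Set.Icc 1 (2*n)) (Set.Icc 1 (2*n)) := by
  intro a ha
  simp only [Set.mem_Icc] at ha ⊢
  obtain ⟨i, hi1, hi2, hcase⟩ : ∃ i, 1 ≤ i ∧ i ≤ n ∧ (a = 2*i-1 ∨ a = 2*i) :=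
    ⟨(a+1)/2, by omega, by omega, by omega⟩
  have hs := cntT_le_n n b
  obtain ⟨hT1, hF1, hTp, hFp⟩ := count_facts n b hi1 hi2
  rcases hcase with rfl | rfl <;> cases hb : b i
  · rw [pmF_oddF n b hi1 hb]; have := hFp hb; omega
  · rw [pmF_oddT n b hi1 hb]; have := hTp hb; omega
  · rw [pmF_evenF n b hi1 hb]; have := hFp hb; omega
  · rw [pmF_evenT n b hi1 hb]; have := hTp hb; omega

/-- pmF is injective on `[1, 2n]`. -/
lemma pmF_injOn (n : ℕ) (b : ℕ → Bool) :
    Set.InjOn (pmF n b) (Set.Icc 1 (2*n)) := by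
  intro a ha a' ha' heq
  simp only [Set.mem_Icc] at ha ha'
  obtain ⟨i, hi1, hi2, hcase⟩ : ∃ i, 1 ≤ i ∧ i ≤ n ∧ (a = 2*i-1 ∨ a = 2*i) :=
    ⟨(a+1)/2, by omega, by omega, by omega⟩
  obtain ⟨j, hj1, hj2, hcase'⟩ : ∃ j, 1 ≤ j ∧ j ≤ n ∧ (a' = 2*j-1 ∨ a' = 2*j) :=
    ⟨(a'+1)/2, by omega, by omega, by omega⟩
  have hs := cntT_le_n n b
  obtain ⟨hTi1, hFi1, hTpi, hFpi⟩ := count_facts n b hi1 hi2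
  obtain ⟨hTj1, hFj1, hTpj, hFpj⟩ := count_facts n b hj1 hj2
  have htriT : b i = true → b j = true → cntT n b i = cntT n b j → i = j := by
    intro hbi hbj hc
    rcases lt_trichotomy i j with h | h | h
    · exact absurd hc.symm (Nat.ne_of_lt (cntT_strict n b h hi2 hbi))
    · exact h
    · exact absurd hc (Nat.ne_of_lt (cntT_strict n b h hj2 hbj))
  have htriF : b i = false → b j = false → cntF n b i = cntF n b j → i = j := by
    intro hbi hbj hc
    rcases lt_trichotomy i j with h | h | h
    · exact absurd hc.symm (Nat.ne_of_lt (cntF_strict n b h hi2 hbi))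
    · exact h
    · exact absurd hc (Nat.ne_of_lt (cntF_strict n b h hj2 hbj))
  rcases hcase with rfl | rfl <;> rcases hcase' with rfl | rfl <;>
    cases hbi : b i <;> cases hbj : b j <;>
    [rw [pmF_oddF n b hi1 hbi, pmF_oddF n b hj1 hbj] at heq;
     rw [pmF_oddF n b hi1 hbi, pmF_oddT n b hj1 hbj] at heq;
     rw [pmF_oddT n b hi1 hbi, pmF_oddF n b hj1 hbj] at heq;
     rw [pmF_oddT n b hi1 hbi, pmF_oddT n b hj1 hbj] at heq;
     rw [pmF_oddF n b hi1 hbi, pmF_evenF n b hj1 hbj] at heq;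
     rw [pmF_oddF n b hi1 hbi, pmF_evenT n b hj1 hbj] at heq;
     rw [pmF_oddT n b hi1 hbi, pmF_evenF n b hj1 hbj] at heq;
     rw [pmF_oddT n b hi1 hbi, pmF_evenT n b hj1 hbj] at heq;
     rw [pmF_evenF n b hi1 hbi, pmF_oddF n b hj1 hbj] at heq;
     rw [pmF_evenF n b hi1 hbi, pmF_oddT n b hj1 hbj] at heq;
     rw [pmF_evenT n b hi1 hbi, pmF_oddF n b hj1 hbj] at heq;
     rw [pmF_evenT n b hi1 hbi, pmF_oddT n b hj1 hbj] at heq;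
     rw [pmF_evenF n b hi1 hbi, pmF_evenF n b hj1 hbj] at heq;
     rw [pmF_evenF n b hi1 hbi, pmF_evenT n b hj1 hbj] at heq;
     rw [pmF_evenT n b hi1 hbi, pmF_evenF n b hj1 hbj] at heq;
     rw [pmF_evenT n b hi1 hbi, pmF_evenT n b hj1 hbj] at heq] <;>
    first
      | (have x1 := hFpi hbi; have x2 := hFpj hbj;
         have := htriF hbi hbj; omega)
      | (have x1 := hTpi hbi; have x2 := hTpj hbj;
         have := htriT hbi hbj; omega)
      | (have x1 := hFpi hbi; have x2 := hTpj hbj; omega)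
      | (have x1 := hTpi hbi; have x2 := hFpj hbj; omega)

lemma pmF_bijOn (n : ℕ) (b : ℕ → Bool) :
    Set.BijOn (pmF n b) (Set.Icc 1 (2*n)) (Set.Icc 1 (2*n)) :=
  ((Set.finite_Icc _ _).injOn_iff_bijOn_of_mapsTo (pmF_mapsTo n b)).mp (pmF_injOn n b)

lemma pmF_compare (n : ℕ) (b : ℕ → Bool) {i j : ℕ} (hi1 : 1 ≤ i) (hij : i < j) (hjn : j ≤ n) :
    (¬ pmF n b (2*i) < pmF n b (2*j-1)) ∧
    (pmF n b (2*i) < pmF n b (2*j) ↔ (b i = false ∧ b j = true)) ∧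
    (pmF n b (2*i-1) < pmF n b (2*j) ↔ (b i = true ∨ b j = true)) ∧
    (pmF n b (2*i-1) < pmF n b (2*j-1) ↔ (b i = true ∧ b j = false)) := by
  have hj1 : 1 ≤ j := by omega
  have hi2 : i ≤ n := by omega
  have hs := cntT_le_n n b
  obtain ⟨hTi1, hFi1, hTpi, hFpi⟩ := count_facts n b hi1 hi2
  obtain ⟨hTj1, hFj1, hTpj, hFpj⟩ := count_facts n b hj1 hjn
  have hTa : cntT n b j ≤ cntT n b i := cntT_anti n b (le_of_lt hij)
  have hFa : cntF n b j ≤ cntF n b i := cntF_anti n b (le_of_lt hij)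
  cases hbi : b i <;> cases hbj : b j
  · rw [pmF_oddF n b hi1 hbi, pmF_evenF n b hi1 hbi, pmF_oddF n b hj1 hbj,
      pmF_evenF n b hj1 hbj]
    have hst := cntF_strict n b hij hi2 hbi
    have h1 := hFpi hbi; have h2 := hFpj hbj
    simp only [hbi, hbj]
    first | (simp; omega) | simp | omega
  · rw [pmF_oddF n b hi1 hbi, pmF_evenF n b hi1 hbi, pmF_oddT n b hj1 hbj,
      pmF_evenT n b hj1 hbj]
    have h1 := hFpi hbi; have h2 := hTpj hbj
    simp only [hbi, hbj]
    first | (simp; omega) | simp | omega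
  · rw [pmF_oddT n b hi1 hbi, pmF_evenT n b hi1 hbi, pmF_oddF n b hj1 hbj,
      pmF_evenF n b hj1 hbj]
    have h1 := hTpi hbi; have h2 := hFpj hbj
    simp only [hbi, hbj]
    first | (simp; omega) | simp | omega
  · rw [pmF_oddT n b hi1 hbi, pmF_evenT n b hi1 hbi, pmF_oddT n b hj1 hbj,
      pmF_evenT n b hj1 hbj]
    have hst := cntT_strict n b hij hi2 hbi
    have h1 := hTpi hbi; have h2 := hTpj hbj
    simp only [hbi, hbj]
    first | (simp; omega) | simp | omega

lemma pmF_diag (n : ℕ) (b : ℕ → Bool) {i : ℕ} (hi1 : 1 ≤ i) (hin : i ≤ n) :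
    pmF n b (2*i-1) < pmF n b (2*i) ↔ b i = true := by
  have hs := cntT_le_n n b
  obtain ⟨hTi1, hFi1, hTpi, hFpi⟩ := count_facts n b hi1 hin
  cases hbi : b i
  · rw [pmF_oddF n b hi1 hbi, pmF_evenF n b hi1 hbi]
    have h1 := hFpi hbi
    first | (simp; omega) | simp | omega
  · rw [pmF_oddT n b hi1 hbi, pmF_evenT n b hi1 hbi]
    have h1 := hTpi hbi
    first | (simp; omega) | simp | omega

noncomputable def Ymap (n : ℕ) (b : ℕ → Bool) : ℕ → ℕ → ℝ := fun p q =>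
  if 1 ≤ p ∧ p < q ∧ q ≤ 2*n then (if pmF n b p < pmF n b q then 1 else 0) else 0

lemma Ymap_mem_LOP (n : ℕ) (b : ℕ → Bool) : Ymap n b ∈ LOP (2*n) :=
  ⟨fun _ _ h => if_neg h, pmF n b, pmF_bijOn n b,
    fun i j h1 h2 h3 => if_pos ⟨h1, h2, h3⟩⟩

lemma Ymap_diag (n : ℕ) (b : ℕ → Bool) {i : ℕ} (hi1 : 1 ≤ i) (hin : i ≤ n) :
    Ymap n b (2*i-1) (2*i) = if b i = true then (1:ℝ) else 0 := by
  have hr : 1 ≤ 2*i-1 ∧ 2*i-1 < 2*i ∧ 2*i ≤ 2*n := by omega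
  have hd := pmF_diag n b hi1 hin
  simp only [Ymap]
  rw [if_pos hr]
  cases hb : b i <;> simp [hb] at hd ⊢ <;> simp [hd]

lemma Ymap_mem_FaceF (n : ℕ) (b : ℕ → Bool) : Ymap n b ∈ FaceF n := by
  refine ⟨Ymap_mem_LOP n b, fun i j hi1 hij hjn => ?_⟩
  obtain ⟨c1, c2, c3, c4⟩ := pmF_compare n b hi1 hij hjn
  have r1 : Ymap n b (2*i) (2*j-1) = 0 := by
    simp only [Ymap]
    rw [if_pos (by omega : 1 ≤ 2*i ∧ 2*i < 2*j-1 ∧ 2*j-1 ≤ 2*n), if_neg c1]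
  have r2 := Ymap_diag n b hi1 (by omega : i ≤ n)
  have r3 := Ymap_diag n b (by omega : 1 ≤ j) hjn
  have r4 : Ymap n b (2*i) (2*j) = if b i = false ∧ b j = true then (1:ℝ) else 0 := by
    simp only [Ymap]
    rw [if_pos (by omega : 1 ≤ 2*i ∧ 2*i < 2*j ∧ 2*j ≤ 2*n), if_congr c2 rfl rfl]
  have r5 : Ymap n b (2*i-1) (2*j) = if b i = true ∨ b j = true then (1:ℝ) else 0 := by
    simp only [Ymap]
    rw [if_pos (by omega : 1 ≤ 2*i-1 ∧ 2*i-1 < 2*j ∧ 2*j ≤ 2*n), if_congr c3 rfl rfl]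
  have r6 : Ymap n b (2*i-1) (2*j-1) = if b i = true ∧ b j = false then (1:ℝ) else 0 := by
    simp only [Ymap]
    rw [if_pos (by omega : 1 ≤ 2*i-1 ∧ 2*i-1 < 2*j-1 ∧ 2*j-1 ≤ 2*n), if_congr c4 rfl rfl]
  refine ⟨r1, ?_, ?_⟩ <;>
    simp only [r1, r2, r3, r4, r5, r6] <;> cases hbi : b i <;> cases hbj : b j <;>
    simp [hbi, hbj]

/-- every coordinate of `y ∈ FaceF n` is `0` or `1` in range -/
lemma faceF_mem01 (n : ℕ) {y : ℕ → ℕ → ℝ} (hy : y ∈ FaceF n) {p q : ℕ}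
    (h1 : 1 ≤ p) (h2 : p < q) (h3 : q ≤ 2*n) : y p q = 0 ∨ y p q = 1 := by
  obtain ⟨⟨_, π, _, hπ⟩, _⟩ := hy
  rw [hπ p q h1 h2 h3]
  split <;> simp

/-- determination lemma: all cross-block values of `y ∈ FaceF n` are determined
by the diagonal values. -/
lemma faceF_det (n : ℕ) {y : ℕ → ℕ → ℝ} (hy : y ∈ FaceF n) {i j : ℕ}
    (hi1 : 1 ≤ i) (hij : i < j) (hjn : j ≤ n) :
    y (2*i) (2*j-1) = 0 ∧
    y (2*i) (2*j) = (1 - y (2*i-1) (2*i)) * y (2*j-1) (2*j) ∧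
    y (2*i-1) (2*j) = y (2*i-1) (2*i) + y (2*j-1) (2*j)
      - y (2*i-1) (2*i) * y (2*j-1) (2*j) ∧
    y (2*i-1) (2*j-1) = y (2*i-1) (2*i) * (1 - y (2*j-1) (2*j)) := by
  obtain ⟨e1, e2, e3⟩ := hy.2 i j hi1 hij hjn
  have m1 : y (2*i-1) (2*i) = 0 ∨ y (2*i-1) (2*i) = 1 :=
    faceF_mem01 n hy (by omega) (by omega) (by omega)
  have m2 : y (2*j-1) (2*j) = 0 ∨ y (2*j-1) (2*j) = 1 :=
    faceF_mem01 n hy (by omega) (by omega) (by omega)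
  have m3 : y (2*i) (2*j) = 0 ∨ y (2*i) (2*j) = 1 :=
    faceF_mem01 n hy (by omega) (by omega) (by omega)
  have m4 : y (2*i-1) (2*j) = 0 ∨ y (2*i-1) (2*j) = 1 :=
    faceF_mem01 n hy (by omega) (by omega) (by omega)
  have m5 : y (2*i-1) (2*j-1) = 0 ∨ y (2*i-1) (2*j-1) = 1 :=
    faceF_mem01 n hy (by omega) (by omega) (by omega)
  -- in the all-zero diagonal case, transitivity of the permutation forces
  -- `y (2*i-1) (2*j-1) = 0`
  have key : y (2*i-1) (2*i) = 0 → y (2*j-1) (2*j) = 0 → y (2*i-1) (2*j-1) = 0 := by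
    intro hd1 hd2
    rcases m5 with h | h
    · exact h
    exfalso
    obtain ⟨⟨_, π, _, hπ⟩, _⟩ := hy
    have t1 : ¬ π (2*i-1) < π (2*i) := by
      intro hlt
      rw [hπ (2*i-1) (2*i) (by omega) (by omega) (by omega), if_pos hlt] at hd1
      norm_num at hd1
    have t2 : ¬ π (2*i) < π (2*j-1) := by
      intro hlt
      rw [hπ (2*i) (2*j-1) (by omega) (by omega) (by omega), if_pos hlt] at e1
      norm_num at e1
    have t3 : π (2*i-1) < π (2*j-1) := by
      by_contra hlt
      rw [hπ (2*i-1) (2*j-1) (by omega) (by omega) (by omega), if_neg hlt] at h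
      norm_num at h
    omega
  rcases m1 with h1 | h1 <;> rcases m2 with h2 | h2
  · have h5 := key h1 h2
    refine ⟨e1, ?_, ?_, ?_⟩ <;> rcases m3 with h3 | h3 <;> rcases m4 with h4 | h4 <;>
      simp only [h1, h2, h3, h4, h5] at e2 e3 ⊢ <;>
      norm_num at *
  all_goals
    refine ⟨e1, ?_, ?_, ?_⟩ <;> rcases m3 with h3 | h3 <;> rcases m4 with h4 | h4 <;>
      rcases m5 with h5 | h5 <;>
      simp only [h1, h2, h3, h4, h5] at e2 e3 ⊢ <;>
      norm_num at *


lemma diagMap_mapsTo (n : ℕ) : Set.MapsTo (diagMap n) (FaceF n) (cube01 n) := by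
  intro y hy
  constructor
  · intro i h; exact if_neg h
  · intro i h1 h2
    simp only [diagMap, if_pos (⟨h1, h2⟩ : 1 ≤ i ∧ i ≤ n)]
    exact faceF_mem01 n hy (by omega) (by omega) (by omega)

lemma diagMap_injOn (n : ℕ) : Set.InjOn (diagMap n) (FaceF n) := by
  intro y1 hy1 y2 hy2 heq
  have hdiag : ∀ k, 1 ≤ k → k ≤ n → y1 (2*k-1) (2*k) = y2 (2*k-1) (2*k) := by
    intro k hk1 hk2
    have := congrFun heq k
    simpa only [diagMap, if_pos (⟨hk1, hk2⟩ : 1 ≤ k ∧ k ≤ n)] using this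
  funext p q
  by_cases hr : 1 ≤ p ∧ p < q ∧ q ≤ 2*n
  · obtain ⟨i, hi1, hi2, hcase⟩ : ∃ i, 1 ≤ i ∧ i ≤ n ∧ (p = 2*i-1 ∨ p = 2*i) :=
      ⟨(p+1)/2, by omega, by omega, by omega⟩
    obtain ⟨j, hj1, hj2, hcase'⟩ : ∃ j, 1 ≤ j ∧ j ≤ n ∧ (q = 2*j-1 ∨ q = 2*j) :=
      ⟨(q+1)/2, by omega, by omega, by omega⟩
    have hij : i ≤ j := by omega
    rcases eq_or_lt_of_le hij with rfl | hlt
    · have hp : p = 2*i-1 ∧ q = 2*i := by omega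
      rw [hp.1, hp.2]
      exact hdiag i hi1 hi2
    · obtain ⟨d11, d12, d13, d14⟩ := faceF_det n hy1 hi1 hlt hj2
      obtain ⟨d21, d22, d23, d24⟩ := faceF_det n hy2 hi1 hlt hj2
      have ei := hdiag i hi1 hi2
      have ej := hdiag j hj1 hj2
      rcases hcase with rfl | rfl <;> rcases hcase' with rfl | rfl
      · rw [d14, d24, ei, ej]
      · rw [d13, d23, ei, ej]
      · rw [d11, d21]
      · rw [d12, d22, ei, ej]
  · rw [hy1.1.1 p q hr, hy2.1.1 p q hr]

lemma diagMap_surjOn (n : ℕ) : Set.SurjOn (diagMap n) (FaceF n) (cube01 n) := by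
  intro x hx
  classical
  set b : ℕ → Bool := fun i => decide (x i = 1) with hb
  refine ⟨Ymap n b, Ymap_mem_FaceF n b, ?_⟩
  funext i
  by_cases h : 1 ≤ i ∧ i ≤ n
  · simp only [diagMap, if_pos h]
    rw [Ymap_diag n b h.1 h.2]
    rcases hx.2 i h.1 h.2 with h0 | h1
    · have hbi : b i = false := by
        rw [hb]; simp only []
        exact decide_eq_false (by rw [h0]; norm_num)
      rw [hbi, h0]; norm_num
    · have hbi : b i = true := by
        rw [hb]; simp only []
        exact decide_eq_true h1
      rw [hbi, h1]; norm_num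
  · simp only [diagMap, if_neg h]
    exact (hx.1 i h).symm

noncomputable def cubeEquiv (n : ℕ) : ↥(cube01 n) ≃ (Fin n → Bool) := by
  classical
  refine
    { toFun := fun x k => decide ((x : ℕ → ℝ) ((k : ℕ) + 1) = 1)
      invFun := fun f =>
        ⟨fun i => if h : 1 ≤ i ∧ i ≤ n then (if f ⟨i-1, by omega⟩ then 1 else 0) else 0,
         fun i h => dif_neg h,
         fun i h1 h2 => by simp only [dif_pos (⟨h1, h2⟩ : 1 ≤ i ∧ i ≤ n)]; split <;> simp⟩
      left_inv := ?_
      right_inv := ?_ }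
  · intro x
    apply Subtype.ext
    funext i
    by_cases h : 1 ≤ i ∧ i ≤ n
    · simp only [dif_pos h]
      have hco : i - 1 + 1 = i := by omega
      simp only [hco]
      rcases x.2.2 i h.1 h.2 with h0 | h1
      · rw [h0]; simp
      · rw [h1]; simp
    · simp only [dif_neg h]
      exact (x.2.1 i h).symm
  · intro f
    funext k
    have h : 1 ≤ (k : ℕ) + 1 ∧ (k : ℕ) + 1 ≤ n := ⟨by omega, by omega⟩
    simp only [dif_pos h]
    have hidx : (⟨(k : ℕ) + 1 - 1, by omega⟩ : Fin n) = k := by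
      apply Fin.ext; simp
    rw [hidx]
    cases hf : f k <;> simp


/-- the map `y ↦ (y 1 2, y 3 4, …, y (2n-1) (2n))` is a bijection
from `F` onto `{0,1}^n`; in particular `F` has exactly `2 ^ n` elements. -/
theorem faceF_diag_bijection (n : ℕ) :
    Set.BijOn (diagMap n) (FaceF n) (cube01 n) ∧ (FaceF n).ncard = 2 ^ n := by
  have hbij : Set.BijOn (diagMap n) (FaceF n) (cube01 n) :=
    ⟨diagMap_mapsTo n, diagMap_injOn n, diagMap_surjOn n⟩
  refine ⟨hbij, ?_⟩
  have e1 : ↥(FaceF n) ≃ ↥(cube01 n) := Set.BijOn.equiv _ hbij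
  have : Nat.card ↥(FaceF n) = Nat.card (Fin n → Bool) :=
    Nat.card_congr (e1.trans (cubeEquiv n))
  rw [← Nat.card_coe_set_eq, this, Nat.card_eq_fintype_card]
  simp
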